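/- arXiv:2211.02964 — 2 statements merged into one kernel-verified Lean document; each statement's English description precedes it below -/
import Mathlib

section
/- Let z and z' be independent p-dimensional random vectors whose components are independent with mean 0, variance 1 and fourth moments bounded by ν4 < ∞, let Σ be a p×p positive semidefinite matrix, and set ε = Σ^{1/2} z and ε' = Σ^{1/2} z'. Then there exists a constant C depending only on ν4 (and not on p or Σ) such that E{(εᵀ ε')⁴} ≤ C tr²(Σ²). -/
open MeasureTheory ProbabilityTheory Filter Finset Real

noncomputable section
open scoped Classical

-- auxiliary lemmas


lemma aux_abs_pow_le (x : ℝ) {m : ℕ} (hm : m ≤ 4) : |x| ^ m ≤ 1 + x ^ 4 := by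
  rcases le_or_gt (|x|) 1 with h | h
  · calc |x| ^ m ≤ 1 ^ m := pow_le_pow_left₀ (abs_nonneg x) h m
    _ = 1 := one_pow m
    _ ≤ 1 + x ^ 4 := by nlinarith [sq_nonneg (x ^ 2)]
  · have h1 : |x| ^ m ≤ |x| ^ 4 := pow_le_pow_right₀ h.le hm
    have h2 : |x| ^ 4 = x ^ 4 := by
      rw [← abs_pow, abs_of_nonneg (by positivity)]
    nlinarith [abs_nonneg x]

lemma aux_int_pow {Ω : Type} [MeasurableSpace Ω] {P : Measure Ω} [IsProbabilityMeasure P]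
    {f : Ω → ℝ} (hf : Measurable f) (h4 : Integrable (fun ω => f ω ^ 4) P)
    {m : ℕ} (hm : m ≤ 4) : Integrable (fun ω => f ω ^ m) P := by
  refine Integrable.mono ((integrable_const (1:ℝ)).add h4) ((hf.pow_const m).aestronglyMeasurable)
    (Filter.Eventually.of_forall (fun ω => ?_))
  have h1 : |f ω| ^ m ≤ 1 + f ω ^ 4 := aux_abs_pow_le _ hm
  have h2 : (0:ℝ) ≤ 1 + f ω ^ 4 := by nlinarith [abs_nonneg (f ω), pow_nonneg (abs_nonneg (f ω)) m]
  simpa [Real.norm_eq_abs, abs_pow, abs_of_nonneg h2] using h1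

lemma aux_int_sq_sq {Ω : Type} [MeasurableSpace Ω] {P : Measure Ω} [IsProbabilityMeasure P]
    {f g : Ω → ℝ} (hf : Measurable f) (hg : Measurable g)
    (hf4 : Integrable (fun ω => f ω ^ 4) P) (hg4 : Integrable (fun ω => g ω ^ 4) P) :
    Integrable (fun ω => f ω ^ 2 * g ω ^ 2) P := by
  refine Integrable.mono ((hf4.add hg4).div_const 2)
    (((hf.pow_const 2).mul (hg.pow_const 2)).aestronglyMeasurable)
    (Filter.Eventually.of_forall fun ω => ?_)
  have h1 : (0:ℝ) ≤ f ω ^ 2 * g ω ^ 2 := by positivity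
  have h2 : f ω ^ 2 * g ω ^ 2 ≤ (f ω ^ 4 + g ω ^ 4) / 2 := by
    nlinarith [sq_nonneg (f ω ^ 2 - g ω ^ 2)]
  have h3 : (0:ℝ) ≤ (f ω ^ 4 + g ω ^ 4) / 2 := by positivity
  simp only [Pi.add_apply]
  have e1 : ‖f ω ^ 2 * g ω ^ 2‖ = f ω ^ 2 * g ω ^ 2 := by
    rw [Real.norm_eq_abs]; exact abs_of_nonneg h1
  have e2 : ‖(f ω ^ 4 + g ω ^ 4) / 2‖ = (f ω ^ 4 + g ω ^ 4) / 2 := by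
    rw [Real.norm_eq_abs]; exact abs_of_nonneg h3
  rw [e1, e2]
  exact h2

lemma integral_add3 {Ω : Type} [MeasurableSpace Ω] {P : Measure Ω}
    {f1 f2 f3 : Ω → ℝ} (h1 : Integrable f1 P) (h2 : Integrable f2 P) (h3 : Integrable f3 P) :
    ∫ ω, (f1 ω + f2 ω + f3 ω) ∂P = (∫ ω, f1 ω ∂P) + (∫ ω, f2 ω ∂P) + ∫ ω, f3 ω ∂P := by
  have e1 : ∫ ω, ((f1 ω + f2 ω) + f3 ω) ∂P = (∫ ω, (f1 ω + f2 ω) ∂P) + ∫ ω, f3 ω ∂P :=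
    integral_add (h1.add h2) h3
  have e2 : ∫ ω, (f1 ω + f2 ω) ∂P = (∫ ω, f1 ω ∂P) + ∫ ω, f2 ω ∂P := integral_add h1 h2
  rw [e1, e2]

lemma integral_add5 {Ω : Type} [MeasurableSpace Ω] {P : Measure Ω}
    {f1 f2 f3 f4 f5 : Ω → ℝ} (h1 : Integrable f1 P) (h2 : Integrable f2 P)
    (h3 : Integrable f3 P) (h4 : Integrable f4 P) (h5 : Integrable f5 P) :
    ∫ ω, (f1 ω + f2 ω + f3 ω + f4 ω + f5 ω) ∂P
      = (∫ ω, f1 ω ∂P) + (∫ ω, f2 ω ∂P) + (∫ ω, f3 ω ∂P) + (∫ ω, f4 ω ∂P) + ∫ ω, f5 ω ∂P := by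
  have e1 : ∫ ω, ((f1 ω + f2 ω + f3 ω + f4 ω) + f5 ω) ∂P
      = (∫ ω, (f1 ω + f2 ω + f3 ω + f4 ω) ∂P) + ∫ ω, f5 ω ∂P :=
    integral_add (((h1.add h2).add h3).add h4) h5
  have e2 : ∫ ω, ((f1 ω + f2 ω + f3 ω) + f4 ω) ∂P
      = (∫ ω, (f1 ω + f2 ω + f3 ω) ∂P) + ∫ ω, f4 ω ∂P :=
    integral_add ((h1.add h2).add h3) h4
  rw [e1, e2, integral_add3 h1 h2 h3]

lemma iIndepFun_precomp {Ω ι ι' : Type*} [MeasurableSpace Ω] {P : Measure Ω}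
    {f : ι → Ω → ℝ} (g : ι' → ι) (hg : Function.Injective g)
    (h : iIndepFun f P) :
    iIndepFun (fun j => f (g j)) P := by
  classical
  rw [iIndepFun_iff] at h ⊢
  intro s f' hf'
  set F : ι → Set Ω := fun i =>
    if hi : ∃ j ∈ s, g j = i then f' hi.choose else Set.univ with hF
  have hFg : ∀ j ∈ s, F (g j) = f' j := by
    intro j hj
    have hex : ∃ j' ∈ s, g j' = g j := ⟨j, hj, rfl⟩
    have hspec := hex.choose_spec
    have : hex.choose = j := hg hspec.2
    simp only [hF, dif_pos hex, this]
  have h1 : (⋂ j ∈ s, f' j) = ⋂ i ∈ s.image g, F i := by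
    rw [Finset.set_biInter_finset_image]
    exact Set.iInter₂_congr (fun j hj => (hFg j hj).symm)
  have h2 : (∏ j ∈ s, P (f' j)) = ∏ i ∈ s.image g, P (F i) := by
    rw [Finset.prod_image (fun a ha b hb hab => hg hab)]
    exact Finset.prod_congr rfl (fun j hj => by rw [hFg j hj])
  rw [h1, h2]
  refine h (s.image g) (fun i hi => ?_)
  rcases Finset.mem_image.mp hi with ⟨j, hj, rfl⟩
  rw [hFg j hj]
  exact hf' j hj

lemma lin_bound {Ω : Type} [MeasurableSpace Ω] {P : Measure Ω} [IsProbabilityMeasure P]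
    {p : ℕ} {ν' : ℝ} (hν3 : 3 ≤ ν') (w : Fin p → Ω → ℝ) (hw : ∀ i, Measurable (w i))
    (hind : iIndepFun w P)
    (hmean : ∀ i, ∫ ω, w i ω ∂P = 0)
    (hvar : ∀ i, ∫ ω, (w i ω) ^ 2 ∂P = 1)
    (hint4 : ∀ i, Integrable (fun ω => (w i ω) ^ 4) P)
    (hν : ∀ i, ∫ ω, (w i ω) ^ 4 ∂P ≤ ν')
    (a : Fin p → ℝ) (s : Finset (Fin p)) :
    Integrable (fun ω => (∑ i ∈ s, a i * w i ω) ^ 4) P ∧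
    ∫ ω, (∑ i ∈ s, a i * w i ω) ∂P = 0 ∧
    ∫ ω, (∑ i ∈ s, a i * w i ω) ^ 2 ∂P = ∑ i ∈ s, (a i) ^ 2 ∧
    ∫ ω, (∑ i ∈ s, a i * w i ω) ^ 4 ∂P ≤ ν' * (∑ i ∈ s, (a i) ^ 2) ^ 2 := by
  classical
  induction s using Finset.induction_on with
  | empty =>
    simp
  | @insert j s hj IH =>
    obtain ⟨IH1, IH2, IH3, IH4⟩ := IH
    set f : Fin p → Ω → ℝ := fun i ω => a i * w i ω with hfdef
    have hfm : ∀ i, Measurable (f i) := fun i => (hw i).const_mul _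
    set S : Ω → ℝ := fun ω => ∑ i ∈ s, f i ω with hSdef
    set Y : Ω → ℝ := fun ω => f j ω with hYdef
    have hSm : Measurable S := Finset.measurable_sum _ (fun i _ => hfm i)
    have hYm : Measurable Y := hfm j
    have hindf : iIndepFun f P :=
      hind.comp (fun i => fun x => a i * x) (fun i => measurable_const_mul _)
    have hSY : IndepFun S Y P := by
      have := hindf.indepFun_finset_sum_of_notMem hfm hj
      have hSeq : (∑ i ∈ s, f i) = S := by funext ω; simp [hSdef, Finset.sum_apply]
      rwa [hSeq] at this
    have hSYpow : ∀ k m : ℕ, IndepFun (fun ω => S ω ^ k) (fun ω => Y ω ^ m) P := by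
      intro k m
      exact hSY.comp (measurable_id.pow_const k) (measurable_id.pow_const m)
    have hY4 : Integrable (fun ω => Y ω ^ 4) P := by
      have : (fun ω => Y ω ^ 4) = fun ω => a j ^ 4 * w j ω ^ 4 := by
        funext ω; simp [hYdef, hfdef, mul_pow]
      rw [this]; exact (hint4 j).const_mul _
    have hYk : ∀ m, m ≤ 4 → Integrable (fun ω => Y ω ^ m) P := fun m hm => aux_int_pow hYm hY4 hm
    have hSk : ∀ m, m ≤ 4 → Integrable (fun ω => S ω ^ m) P := fun m hm => aux_int_pow hSm IH1 hm
    have hSint : Integrable S P := by simpa using hSk 1 (by norm_num)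
    have hYint : Integrable Y P := by simpa using hYk 1 (by norm_num)
    have hprod : ∀ k m : ℕ, k ≤ 4 → m ≤ 4 →
        Integrable (fun ω => S ω ^ k * Y ω ^ m) P := fun k m hk hm =>
      (hSYpow k m).integrable_mul (hSk k hk) (hYk m hm)
    have hEY : ∫ ω, Y ω ∂P = 0 := by
      simp only [hYdef, hfdef]
      rw [integral_const_mul, hmean j, mul_zero]
    have hEY2 : ∫ ω, Y ω ^ 2 ∂P = a j ^ 2 := by
      have : (fun ω => Y ω ^ 2) = fun ω => a j ^ 2 * w j ω ^ 2 := by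
        funext ω; simp [hYdef, hfdef, mul_pow]
      rw [this, integral_const_mul, hvar j, mul_one]
    have hEY4 : ∫ ω, Y ω ^ 4 ∂P = a j ^ 4 * ∫ ω, w j ω ^ 4 ∂P := by
      have : (fun ω => Y ω ^ 4) = fun ω => a j ^ 4 * w j ω ^ 4 := by
        funext ω; simp [hYdef, hfdef, mul_pow]
      rw [this, integral_const_mul]
    have hE_mul : ∀ k m : ℕ, k ≤ 4 → m ≤ 4 → ∫ ω, S ω ^ k * Y ω ^ m ∂P =
        (∫ ω, S ω ^ k ∂P) * ∫ ω, Y ω ^ m ∂P := fun k m hk hm =>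
      (hSYpow k m).integral_fun_mul_eq_mul_integral (hSk k hk).aestronglyMeasurable (hYk m hm).aestronglyMeasurable
    have hsum : ∀ ω, (∑ i ∈ insert j s, a i * w i ω) = Y ω + S ω := by
      intro ω; rw [Finset.sum_insert hj]
    have hexp4 : (fun ω => (∑ i ∈ insert j s, a i * w i ω) ^ 4) =
        fun ω => S ω ^ 4 + 4 * (S ω ^ 3 * Y ω ^ 1) + 6 * (S ω ^ 2 * Y ω ^ 2)
          + 4 * (S ω ^ 1 * Y ω ^ 3) + Y ω ^ 4 := by
      funext ω; rw [hsum ω]; ring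
    have hint40 : Integrable (fun ω => (∑ i ∈ insert j s, a i * w i ω) ^ 4) P := by
      rw [hexp4]
      exact ((((hSk 4 le_rfl).add ((hprod 3 1 (by norm_num) (by norm_num)).const_mul 4)).add
        ((hprod 2 2 (by norm_num) (by norm_num)).const_mul 6)).add
        ((hprod 1 3 (by norm_num) (by norm_num)).const_mul 4)).add hY4
    refine ⟨hint40, ?_, ?_, ?_⟩
    · have : (fun ω => (∑ i ∈ insert j s, a i * w i ω)) = fun ω => Y ω + S ω := by
        funext ω; exact hsum ω
      rw [this, integral_add hYint hSint, hEY, IH2, add_zero]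
    · have hexp2 : (fun ω => (∑ i ∈ insert j s, a i * w i ω) ^ 2) =
          fun ω => S ω ^ 2 + 2 * (S ω ^ 1 * Y ω ^ 1) + Y ω ^ 2 := by
        funext ω; rw [hsum ω]; ring
      rw [hexp2, integral_add3 (hSk 2 (by norm_num))
        ((hprod 1 1 (by norm_num) (by norm_num)).const_mul 2) (hYk 2 (by norm_num)),
        integral_const_mul, hE_mul 1 1 (by norm_num) (by norm_num)]
      simp only [pow_one] at *
      rw [Finset.sum_insert hj]
      rw [IH2, IH3, hEY2]
      ring
    · rw [hexp4, integral_add5 (hSk 4 le_rfl)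
          ((hprod 3 1 (by norm_num) (by norm_num)).const_mul 4)
          ((hprod 2 2 (by norm_num) (by norm_num)).const_mul 6)
          ((hprod 1 3 (by norm_num) (by norm_num)).const_mul 4) hY4,
        integral_const_mul, integral_const_mul, integral_const_mul,
        hE_mul 3 1 (by norm_num) (by norm_num), hE_mul 2 2 (by norm_num) (by norm_num),
        hE_mul 1 3 (by norm_num) (by norm_num)]
      simp only [pow_one, hEY, mul_zero, zero_mul, add_zero, IH2]
      rw [hEY2, hEY4]
      have hS2 : ∫ ω, S ω ^ 2 ∂P = ∑ i ∈ s, a i ^ 2 := IH3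
      have hA : (0:ℝ) ≤ ∑ i ∈ s, a i ^ 2 := Finset.sum_nonneg (fun i _ => sq_nonneg _)
      have hw4 : ∫ ω, w j ω ^ 4 ∂P ≤ ν' := hν j
      have hw4nn : (0:ℝ) ≤ ∫ ω, w j ω ^ 4 ∂P := integral_nonneg (fun ω => by positivity)
      rw [Finset.sum_insert hj, hS2]
      nlinarith [sq_nonneg (a j), sq_nonneg (a j ^ 2), IH4,
        mul_le_mul_of_nonneg_left hw4 (sq_nonneg (a j ^ 2)),
        mul_nonneg hA (sq_nonneg (a j)), sq_nonneg ((∑ i ∈ s, a i ^ 2) + a j ^ 2)]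


/-- Euclidean inner product of two `p`-vectors. -/
def dotp {p : ℕ} (x y : Fin p → ℝ) : ℝ := ∑ i, x i * y i

/-- Sample autocovariance at lag `k`, based on observations at times `1,…,n`:
`Σ̂(k)_{ij} = n⁻¹ ∑_{t=1}^{n-k} x_{t+k,i} x_{t,j}`. -/
def sCov (n : ℕ) {p : ℕ} (x : ℕ → Fin p → ℝ) (k : ℕ) (i j : Fin p) : ℝ :=
  (∑ t ∈ Finset.Icc 1 (n - k), x (t + k) i * x t j) / n

/-- Sample autocorrelation at lag `k`:  `ρ̂_{ij}(k)`. -/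
def sCorr (n : ℕ) {p : ℕ} (x : ℕ → Fin p → ℝ) (k : ℕ) (i j : Fin p) : ℝ :=
  sCov n x k i j / Real.sqrt (sCov n x 0 i i * sCov n x 0 j j)

/-- The max-type statistic `T_MAX = max_{1≤k≤K} max_{i,j} √n |ρ̂_{ij}(k)|`. -/
def tMax (n K : ℕ) {p : ℕ} (x : ℕ → Fin p → ℝ) : ℝ :=
  ⨆ k : Fin K, ⨆ i : Fin p, ⨆ j : Fin p, Real.sqrt n * |sCorr n x (k.1 + 1) i j|

/-- The sum-type statistic `T_SUM`. -/
def tSum (n K : ℕ) {p : ℕ} (x : ℕ → Fin p → ℝ) : ℝ :=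
  (∑ l ∈ Finset.Icc 1 K, ∑ t ∈ Finset.Icc 1 (n - l), ∑ s ∈ Finset.Icc 1 (n - l),
      if t = s then 0 else dotp (x t) (x s) * dotp (x (t + l)) (x (s + l)))
    / ((n : ℝ) * ((n : ℝ) - 1))

/-- The estimator `hat-tr(Σ²)` of `tr(Σ²)`. -/
def hatTr (n : ℕ) {p : ℕ} (x : ℕ → Fin p → ℝ) : ℝ :=
  (∑ t ∈ Finset.Icc 1 n, ∑ s ∈ Finset.Icc 1 n,
      if t = s then 0 else (dotp (x t) (x s)) ^ 2) / ((n : ℝ) * ((n : ℝ) - 1))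

/-- The estimated normalization `σ̂_S = √(2K/(n(n-1))) ⋅ hat-tr(Σ²)`. -/
def hatSigmaS (n K : ℕ) {p : ℕ} (x : ℕ → Fin p → ℝ) : ℝ :=
  Real.sqrt (2 * K / ((n : ℝ) * ((n : ℝ) - 1))) * hatTr n x

/-- The Gumbel-type limit `G(y) = exp(−π^{−1/2} e^{−y/2})`. -/
def gumbelG (y : ℝ) : ℝ := Real.exp (-(Real.exp (-y / 2)) / Real.sqrt Real.pi)

/-- The standard normal CDF `Φ`. -/
def stdNormCDF (y : ℝ) : ℝ := ((gaussianReal 0 1) (Set.Iic y)).toReal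

/-- Largest eigenvalue of a symmetric matrix, as the sup of its quadratic form
over the unit sphere. -/
def lamMax {p : ℕ} (S : Matrix (Fin p) (Fin p) ℝ) : ℝ :=
  ⨆ v : {v : Fin p → ℝ // ∑ i, (v i) ^ 2 = 1}, ∑ i, ∑ j, v.1 i * S i j * v.1 j

/-- Smallest eigenvalue of a symmetric matrix. -/
def lamMin {p : ℕ} (S : Matrix (Fin p) (Fin p) ℝ) : ℝ :=
  ⨅ v : {v : Fin p → ℝ // ∑ i, (v i) ^ 2 = 1}, ∑ i, ∑ j, v.1 i * S i j * v.1 j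

/-- `M_p = max_{1≤i≤p} ∑_{j≠i} σ_{ij}²`. -/
def offDiagMax {p : ℕ} (S : Matrix (Fin p) (Fin p) ℝ) : ℝ :=
  ⨆ i : Fin p, ∑ j ∈ Finset.univ.erase i, (S i j) ^ 2

/-- Population correlation `ρ_{ij} = σ_{ij}/(σ_i σ_j)`. -/
def corrOf {p : ℕ} (S : Matrix (Fin p) (Fin p) ℝ) (i j : Fin p) : ℝ :=
  S i j / Real.sqrt (S i i * S j j)

/-- The set `C_p` of Condition (C3): pairs `(i,j)` such that the number of pairs `(s,l)`
with `|ρ_{ij} ρ_{sl}| ≥ δ` is at least `p^κ`. -/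
def strongSet {p : ℕ} (S : Matrix (Fin p) (Fin p) ℝ) (δ κ : ℝ) : Finset (Fin p × Fin p) :=
  Finset.univ.filter (fun ij =>
    (p : ℝ) ^ κ ≤ ((Finset.univ.filter (fun sl : Fin p × Fin p =>
      δ ≤ |corrOf S ij.1 ij.2 * corrOf S sl.1 sl.2|)).card : ℝ))

/-- fourth-moment bound for the bilinear form.  If `ε = Σ^{1/2} z` and
`ε' = Σ^{1/2} z'` with `z, z'` independent vectors having jointly independent
standardized components whose fourth moments are bounded by `ν4`, then
`E{(εᵀε')⁴} ≤ C tr²(Σ²)` for a constant `C = C(ν4)` not depending on `p` or `Σ`. -/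
theorem bilinear_form_fourth_moment_bound (ν4 : ℝ) :
    ∃ C : ℝ,
      ∀ (p : ℕ) (Ω : Type) (_ : MeasurableSpace Ω) (P : Measure Ω),
        IsProbabilityMeasure P →
      ∀ (Sig R : Matrix (Fin p) (Fin p) ℝ) (z z' : Ω → Fin p → ℝ),
        Measurable z → Measurable z' →
        -- `R = Σ^{1/2}`: the positive semidefinite square root of `Σ`
        R.PosSemidef → R * R = Sig →
        -- all components of `z` and `z'` are jointly independent:
        iIndepFun
          (fun (bi : Bool × Fin p) => fun ω => if bi.1 then z ω bi.2 else z' ω bi.2) P →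
        -- standardized components with fourth moments bounded by `ν4`:
        (∀ i, ∫ ω, z ω i ∂P = 0) → (∀ i, ∫ ω, z' ω i ∂P = 0) →
        (∀ i, ∫ ω, (z ω i) ^ 2 ∂P = 1) → (∀ i, ∫ ω, (z' ω i) ^ 2 ∂P = 1) →
        (∀ i, Integrable (fun ω => (z ω i) ^ 4) P) →
        (∀ i, Integrable (fun ω => (z' ω i) ^ 4) P) →
        (∀ i, ∫ ω, (z ω i) ^ 4 ∂P ≤ ν4) → (∀ i, ∫ ω, (z' ω i) ^ 4 ∂P ≤ ν4) →
        ∫ ω, (dotp (R.mulVec (z ω)) (R.mulVec (z' ω))) ^ 4 ∂P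
          ≤ C * (Matrix.trace (Sig ^ 2)) ^ 2 := by
    classical
  set ν' : ℝ := max ν4 3 with hν'def
  refine ⟨ν' ^ 2, ?_⟩
  intro p Ω mΩ P hP Sig R z z' hz hz' hRpsd hRR hiid hm hm' hv hv' hi4 hi4' hb hb'
  have hν'3 : (3:ℝ) ≤ ν' := le_max_right _ _
  have hν'0 : (0:ℝ) ≤ ν' := le_trans (by norm_num) hν'3
  have hν4le : ν4 ≤ ν' := le_max_left _ _
  -- component measurability
  have hzc : ∀ i, Measurable (fun ω => z ω i) := fun i => (measurable_pi_apply i).comp hz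
  have hz'c : ∀ i, Measurable (fun ω => z' ω i) := fun i => (measurable_pi_apply i).comp hz'
  -- componentwise independence of z and of z'
  have hindz : iIndepFun
      (fun i => fun ω => z ω i) P := by
    have h := iIndepFun_precomp (fun i : Fin p => ((true, i) : Bool × Fin p))
      (fun a b hab => by simpa using congrArg Prod.snd hab) hiid
    simpa using h
  have hindz' : iIndepFun
      (fun i => fun ω => z' ω i) P := by
    have h := iIndepFun_precomp (fun i : Fin p => ((false, i) : Bool × Fin p))
      (fun a b hab => by simpa using congrArg Prod.snd hab) hiid
    simpa using h
  -- symmetry of R and Sig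
  have hsym : ∀ i j, R i j = R j i := by
    intro i j
    have h := congrFun (congrFun hRpsd.1 i) j
    simpa [Matrix.conjTranspose_apply] using h.symm
  have hSigSym : ∀ i k, Sig i k = Sig k i := by
    intro i k
    rw [← hRR]
    simp only [Matrix.mul_apply]
    exact Finset.sum_congr rfl (fun j _ => by rw [hsym i j, hsym j k]; ring)
    -- mulVec in coordinates
  have hmvec : ∀ (y : Fin p → ℝ) (k : Fin p), Sig.mulVec y k = ∑ i, Sig k i * y i := by
    intro y k; simp [Matrix.mulVec, dotProduct]
  -- the bilinear form identity
  have hdot : ∀ x y : Fin p → ℝ,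
      dotp (R.mulVec x) (R.mulVec y) = ∑ i, Sig.mulVec y i * x i := by
    intro x y
    have e0 : dotp (R.mulVec x) (R.mulVec y)
        = ∑ i, (∑ j, R i j * x j) * (∑ k, R i k * y k) := by
      simp [dotp, Matrix.mulVec, dotProduct]
    rw [e0]
    calc ∑ i, (∑ j, R i j * x j) * (∑ k, R i k * y k)
        = ∑ i, ∑ j, ∑ k, (R i j * x j) * (R i k * y k) :=
          Finset.sum_congr rfl (fun i _ => Finset.sum_mul_sum _ _ _ _)
      _ = ∑ j, ∑ i, ∑ k, (R i j * x j) * (R i k * y k) := Finset.sum_comm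
      _ = ∑ j, ∑ k, ∑ i, (R i j * x j) * (R i k * y k) :=
          Finset.sum_congr rfl (fun j _ => Finset.sum_comm)
      _ = ∑ j, Sig.mulVec y j * x j := by
          refine Finset.sum_congr rfl (fun j _ => ?_)
          rw [hmvec y j, Finset.sum_mul]
          refine Finset.sum_congr rfl (fun k _ => ?_)
          rw [← hRR, Matrix.mul_apply, Finset.sum_mul, Finset.sum_mul]
          refine Finset.sum_congr rfl (fun i _ => ?_)
          rw [hsym i j]; ring
  -- trace identity
  set c : Fin p → ℝ := fun k => ∑ i, Sig k i ^ 2 with hcdef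
  have hc0 : ∀ k, 0 ≤ c k := fun k => Finset.sum_nonneg fun i _ => sq_nonneg _
  have htr : Matrix.trace (Sig ^ 2) = ∑ k, c k := by
    rw [pow_two, Matrix.trace]
    refine Finset.sum_congr rfl (fun k _ => ?_)
    rw [Matrix.diag_apply, Matrix.mul_apply, hcdef]
    refine Finset.sum_congr rfl (fun i _ => ?_)
    rw [hSigSym i k]; ring
  -- V and its moments
  set V : Fin p → Ω → ℝ := fun k ω => ∑ i, Sig k i * z' ω i with hVdef
  have hVm : ∀ k, Measurable (V k) :=
    fun k => Finset.measurable_sum _ fun i _ => (hz'c i).const_mul _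
  have hlinV := fun k => lin_bound hν'3 (fun i ω => z' ω i) hz'c hindz' hm' hv' hi4'
    (fun i => le_trans (hb' i) hν4le) (fun i => Sig k i) Finset.univ
  have hV4int : ∀ k, Integrable (fun ω => V k ω ^ 4) P := fun k => (hlinV k).1
  have hV4 : ∀ k, ∫ ω, V k ω ^ 4 ∂P ≤ ν' * (c k) ^ 2 := fun k => (hlinV k).2.2.2
  have hVkl_int : ∀ k l, Integrable (fun ω => V k ω ^ 2 * V l ω ^ 2) P :=
    fun k l => aux_int_sq_sq (hVm k) (hVm l) (hV4int k) (hV4int l)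
  -- the Cauchy–Schwarz step for the V's
  have hkey : ∀ k l, ∫ ω, V k ω ^ 2 * V l ω ^ 2 ∂P ≤ ν' * (c k * c l) := by
    have hzcase : ∀ k l, c k = 0 → ∫ ω, V k ω ^ 2 * V l ω ^ 2 ∂P ≤ ν' * (c k * c l) := by
      intro k l hck
      have hzero : ∀ i, Sig k i = 0 := by
        intro i
        have h := (Finset.sum_eq_zero_iff_of_nonneg
          (fun i _ => sq_nonneg (Sig k i))).mp hck i (Finset.mem_univ i)
        exact pow_eq_zero_iff two_ne_zero |>.mp h
      have hVz : ∀ ω, V k ω = 0 := by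
        intro ω
        simp only [hVdef]
        exact Finset.sum_eq_zero fun i _ => by rw [hzero i, zero_mul]
      have he : (fun ω => V k ω ^ 2 * V l ω ^ 2) = fun _ => (0:ℝ) := by
        funext ω; rw [hVz ω]; ring
      rw [he, integral_zero, hck]
      simp
    intro k l
    by_cases hck : c k = 0
    · exact hzcase k l hck
    by_cases hcl : c l = 0
    · have h := hzcase l k hcl
      have he : (fun ω => V l ω ^ 2 * V k ω ^ 2) = fun ω => V k ω ^ 2 * V l ω ^ 2 := by
        funext ω; ring
      rw [he] at h
      calc ∫ ω, V k ω ^ 2 * V l ω ^ 2 ∂P ≤ ν' * (c l * c k) := h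
        _ = ν' * (c k * c l) := by ring
    have hk : 0 < c k := lt_of_le_of_ne (hc0 k) (Ne.symm hck)
    have hl : 0 < c l := lt_of_le_of_ne (hc0 l) (Ne.symm hcl)
    set t : ℝ := c l / c k with htdef
    have ht : 0 < t := div_pos hl hk
    have htne : t ≠ 0 := ht.ne'
    have hpt : ∀ ω, V k ω ^ 2 * V l ω ^ 2 ≤ (t * V k ω ^ 4 + t⁻¹ * V l ω ^ 4) / 2 := by
      intro ω
      have expand : t * V k ω ^ 4 + t⁻¹ * V l ω ^ 4 - 2 * (V k ω ^ 2 * V l ω ^ 2)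
          = t⁻¹ * (t * V k ω ^ 2 - V l ω ^ 2) ^ 2 := by
        field_simp
        ring
      have h3 : 0 ≤ t⁻¹ * (t * V k ω ^ 2 - V l ω ^ 2) ^ 2 :=
        mul_nonneg (inv_nonneg.mpr ht.le) (sq_nonneg _)
      linarith
    have hgint : Integrable (fun ω => (t * V k ω ^ 4 + t⁻¹ * V l ω ^ 4) / 2) P :=
      (((hV4int k).const_mul t).add ((hV4int l).const_mul t⁻¹)).div_const 2
    have hmono := integral_mono (hVkl_int k l) hgint hpt
    have heq : ∫ ω, (t * V k ω ^ 4 + t⁻¹ * V l ω ^ 4) / 2 ∂P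
        = (t * (∫ ω, V k ω ^ 4 ∂P) + t⁻¹ * ∫ ω, V l ω ^ 4 ∂P) / 2 := by
      rw [integral_div, integral_add ((hV4int k).const_mul t) ((hV4int l).const_mul t⁻¹),
        integral_const_mul, integral_const_mul]
    have f1 : t * ∫ ω, V k ω ^ 4 ∂P ≤ ν' * (c k * c l) := by
      have e : t * (ν' * c k ^ 2) = ν' * (c k * c l) := by
        rw [htdef]; field_simp
      calc t * ∫ ω, V k ω ^ 4 ∂P ≤ t * (ν' * c k ^ 2) :=
            mul_le_mul_of_nonneg_left (hV4 k) ht.le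
        _ = ν' * (c k * c l) := e
    have f2 : t⁻¹ * ∫ ω, V l ω ^ 4 ∂P ≤ ν' * (c k * c l) := by
      have e3 : t⁻¹ = c k / c l := by rw [htdef, inv_div]
      have e : (c k / c l) * (ν' * c l ^ 2) = ν' * (c k * c l) := by
        field_simp
      calc t⁻¹ * ∫ ω, V l ω ^ 4 ∂P ≤ t⁻¹ * (ν' * c l ^ 2) :=
            mul_le_mul_of_nonneg_left (hV4 l) (inv_nonneg.mpr ht.le)
        _ = ν' * (c k * c l) := by rw [e3]; exact e
    rw [heq] at hmono
    linarith
  -- integral of (∑ V²)²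
  have hVVexp : (fun ω => (∑ k, V k ω ^ 2) ^ 2)
      = fun ω => ∑ k, ∑ l, V k ω ^ 2 * V l ω ^ 2 := by
    funext ω; rw [sq, Finset.sum_mul_sum]
  have hsumVV_int : Integrable (fun ω => (∑ k, V k ω ^ 2) ^ 2) P := by
    rw [hVVexp]
    exact integrable_finset_sum _ fun k _ => integrable_finset_sum _ fun l _ => hVkl_int k l
  have hsumVV : ∫ ω, (∑ k, V k ω ^ 2) ^ 2 ∂P ≤ ν' * (∑ k, c k) ^ 2 := by
    rw [hVVexp, integral_finset_sum _ (fun k _ =>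
      integrable_finset_sum _ fun l _ => hVkl_int k l)]
    calc ∑ k, ∫ ω, (∑ l, V k ω ^ 2 * V l ω ^ 2) ∂P
        = ∑ k, ∑ l, ∫ ω, V k ω ^ 2 * V l ω ^ 2 ∂P :=
          Finset.sum_congr rfl (fun k _ => integral_finset_sum _ (fun l _ => hVkl_int k l))
      _ ≤ ∑ k, ∑ l, ν' * (c k * c l) :=
          Finset.sum_le_sum (fun k _ => Finset.sum_le_sum (fun l _ => hkey k l))
      _ = ν' * (∑ k, c k) ^ 2 := by
          rw [sq, Finset.sum_mul_sum, Finset.mul_sum]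
          exact Finset.sum_congr rfl fun k _ => (Finset.mul_sum _ _ _).symm
  -- independence of z and z' as random vectors
  have hXm : ∀ bi : Bool × Fin p,
      Measurable (fun ω => if bi.1 then z ω bi.2 else z' ω bi.2) := by
    rintro ⟨b, i⟩
    cases b
    · simpa using hz'c i
    · simpa using hzc i
  set Sb : Finset (Bool × Fin p) := Finset.univ.filter (fun bi => bi.1 = true) with hSbdef
  set Tb : Finset (Bool × Fin p) := Finset.univ.filter (fun bi => bi.1 = false) with hTbdef
  have hdisj : Disjoint Sb Tb := by
    rw [Finset.disjoint_left]
    intro bi h1 h2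
    rw [hSbdef, Finset.mem_filter] at h1
    rw [hTbdef, Finset.mem_filter] at h2
    rw [h1.2] at h2
    exact Bool.noConfusion h2.2
  have hUV := hiid.indepFun_finset Sb Tb hdisj hXm
  have hmemS : ∀ i : Fin p, ((true, i) : Bool × Fin p) ∈ Sb := fun i => by
    rw [hSbdef]; exact Finset.mem_filter.mpr ⟨Finset.mem_univ _, rfl⟩
  have hmemT : ∀ i : Fin p, ((false, i) : Bool × Fin p) ∈ Tb := fun i => by
    rw [hTbdef]; exact Finset.mem_filter.mpr ⟨Finset.mem_univ _, rfl⟩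
  have hzz' : IndepFun z z' P := by
    set φS : ({x // x ∈ Sb} → ℝ) → (Fin p → ℝ) := fun v i => v ⟨(true, i), hmemS i⟩ with hφSdef
    set φT : ({x // x ∈ Tb} → ℝ) → (Fin p → ℝ) := fun v i => v ⟨(false, i), hmemT i⟩ with hφTdef
    have hφSm : Measurable φS := measurable_pi_lambda _ (fun i => measurable_pi_apply _)
    have hφTm : Measurable φT := measurable_pi_lambda _ (fun i => measurable_pi_apply _)
    have hcomp := hUV.comp hφSm hφTm
    have hzeq : (φS ∘ fun a (i : {x // x ∈ Sb}) =>
        if (i : Bool × Fin p).1 then z a (i : Bool × Fin p).2 else z' a (i : Bool × Fin p).2) = z := by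
      funext a
      funext i
      simp [hφSdef]
    have hz'eq : (φT ∘ fun a (i : {x // x ∈ Tb}) =>
        if (i : Bool × Fin p).1 then z a (i : Bool × Fin p).2 else z' a (i : Bool × Fin p).2) = z' := by
      funext a
      funext i
      simp [hφTdef]
    rw [← hzeq, ← hz'eq]
    exact hcomp
  -- product structure of the joint law
  set μ := P.map z with hμdef
  set ν := P.map z' with hνdef
  haveI hμP : IsProbabilityMeasure μ := by rw [hμdef]; exact Measure.isProbabilityMeasure_map hz.aemeasurable
  haveI hνP : IsProbabilityMeasure ν := by rw [hνdef]; exact Measure.isProbabilityMeasure_map hz'.aemeasurable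
  have hmap : P.map (fun ω => (z ω, z' ω)) = μ.prod ν :=
    (indepFun_iff_map_prod_eq_prod_map_map hz.aemeasurable hz'.aemeasurable).mp hzz'
  -- measurable bilinear integrand on the product space
  have hmvm : ∀ i, Measurable (fun y : Fin p → ℝ => Sig.mulVec y i) := by
    intro i
    have e : (fun y : Fin p → ℝ => Sig.mulVec y i) = fun y => ∑ k, Sig i k * y k := by
      funext y; exact hmvec y i
    rw [e]
    exact Finset.measurable_sum _ fun k _ => (measurable_pi_apply k).const_mul _
  set F : (Fin p → ℝ) × (Fin p → ℝ) → ℝ :=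
    fun q => (∑ i, Sig.mulVec q.2 i * q.1 i) ^ 4 with hFdef
  have hFm : Measurable F := by
    apply Measurable.pow_const
    exact Finset.measurable_sum _ fun i _ =>
      ((hmvm i).comp measurable_snd).mul ((measurable_pi_apply i).comp measurable_fst)
  set g1 : (Fin p → ℝ) → ℝ := fun x => (∑ i, x i ^ 2) ^ 2 with hg1def
  set g2 : (Fin p → ℝ) → ℝ := fun y => (∑ i, Sig.mulVec y i ^ 2) ^ 2 with hg2def
  have hg1m : Measurable g1 :=
    (Finset.measurable_sum _ fun i _ => (measurable_pi_apply i).pow_const 2).pow_const 2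
  have hg2m : Measurable g2 :=
    (Finset.measurable_sum _ fun i _ => (hmvm i).pow_const 2).pow_const 2
  have hg1int : Integrable g1 μ := by
    rw [hμdef, integrable_map_measure hg1m.aestronglyMeasurable hz.aemeasurable]
    have e : (g1 ∘ z) = fun ω => ∑ i, ∑ j, (z ω i) ^ 2 * (z ω j) ^ 2 := by
      funext ω
      simp only [Function.comp_apply, hg1def]
      rw [sq, Finset.sum_mul_sum]
    rw [e]
    exact integrable_finset_sum _ fun i _ => integrable_finset_sum _ fun j _ =>
      aux_int_sq_sq (hzc i) (hzc j) (hi4 i) (hi4 j)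
  have hg2z' : (g2 ∘ z') = fun ω => (∑ k, V k ω ^ 2) ^ 2 := by
    funext ω
    simp only [Function.comp_apply, hg2def, hVdef]
    congr 1
  have hg2int : Integrable g2 ν := by
    rw [hνdef, integrable_map_measure hg2m.aestronglyMeasurable hz'.aemeasurable, hg2z']
    exact hsumVV_int
  have hFint : Integrable F (μ.prod ν) := by
    refine Integrable.mono (hg1int.mul_prod hg2int) hFm.aestronglyMeasurable
      (Filter.Eventually.of_forall fun q => ?_)
    have hF0 : 0 ≤ F q := by simp only [hFdef]; positivity
    have hcs : (∑ i, Sig.mulVec q.2 i * q.1 i) ^ 2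
        ≤ (∑ i, (Sig.mulVec q.2 i) ^ 2) * (∑ i, (q.1 i) ^ 2) :=
      Finset.sum_mul_sq_le_sq_mul_sq _ _ _
    have h4 : F q ≤ g1 q.1 * g2 q.2 := by
      have h5 := pow_le_pow_left₀ (sq_nonneg _) hcs 2
      calc F q = ((∑ i, Sig.mulVec q.2 i * q.1 i) ^ 2) ^ 2 := by simp only [hFdef]; ring
        _ ≤ ((∑ i, (Sig.mulVec q.2 i) ^ 2) * (∑ i, (q.1 i) ^ 2)) ^ 2 := h5
        _ = g1 q.1 * g2 q.2 := by simp only [hg1def, hg2def]; ring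
    have hg0 : 0 ≤ g1 q.1 * g2 q.2 := by
      apply mul_nonneg
      · simp only [hg1def]; positivity
      · simp only [hg2def]; positivity
    have e1 : ‖F q‖ = F q := by rw [Real.norm_eq_abs]; exact abs_of_nonneg hF0
    have e2 : ‖g1 q.1 * g2 q.2‖ = g1 q.1 * g2 q.2 := by
      rw [Real.norm_eq_abs]; exact abs_of_nonneg hg0
    rw [e1, e2]
    exact h4
  -- the main chain
  have hpairm : Measurable fun ω => (z ω, z' ω) := hz.prodMk hz'
  have step1 : ∫ ω, (dotp (R.mulVec (z ω)) (R.mulVec (z' ω))) ^ 4 ∂P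
      = ∫ ω, F (z ω, z' ω) ∂P := by
    refine integral_congr_ae (Filter.Eventually.of_forall fun ω => ?_)
    simp only [hFdef]
    rw [hdot (z ω) (z' ω)]
  have step2 : ∫ ω, F (z ω, z' ω) ∂P = ∫ q, F q ∂(μ.prod ν) := by
    rw [← hmap]
    exact (integral_map hpairm.aemeasurable hFm.aestronglyMeasurable).symm
  have step3 : ∫ q, F q ∂(μ.prod ν) = ∫ y, ∫ x, F (x, y) ∂μ ∂ν :=
    integral_prod_symm F hFint
  have inner_bound : ∀ y, ∫ x, F (x, y) ∂μ ≤ ν' * g2 y := by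
    intro y
    have e : ∫ x, F (x, y) ∂μ = ∫ ω, F (z ω, y) ∂P := by
      rw [hμdef]
      exact integral_map hz.aemeasurable
        ((hFm.comp (measurable_id.prodMk measurable_const)).aestronglyMeasurable)
    have hlin := lin_bound hν'3 (fun i ω => z ω i) hzc hindz hm hv hi4
      (fun i => le_trans (hb i) hν4le) (fun i => Sig.mulVec y i) Finset.univ
    rw [e]
    exact hlin.2.2.2
  have step4 : ∫ y, (∫ x, F (x, y) ∂μ) ∂ν ≤ ∫ y, ν' * g2 y ∂ν := by
    refine integral_mono_of_nonneg (Filter.Eventually.of_forall fun y => ?_)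
      (hg2int.const_mul ν') (Filter.Eventually.of_forall fun y => inner_bound y)
    exact integral_nonneg fun x => by simp only [hFdef]; positivity
  have step5 : ∫ y, ν' * g2 y ∂ν = ν' * ∫ y, g2 y ∂ν := integral_const_mul ν' _
  have step6 : ∫ y, g2 y ∂ν = ∫ ω, (∑ k, V k ω ^ 2) ^ 2 ∂P := by
    rw [hνdef, integral_map hz'.aemeasurable hg2m.aestronglyMeasurable]
    exact integral_congr_ae (Filter.Eventually.of_forall fun ω => congrFun hg2z' ω)
  calc ∫ ω, (dotp (R.mulVec (z ω)) (R.mulVec (z' ω))) ^ 4 ∂P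
      = ∫ ω, F (z ω, z' ω) ∂P := step1
    _ = ∫ q, F q ∂(μ.prod ν) := step2
    _ = ∫ y, ∫ x, F (x, y) ∂μ ∂ν := step3
    _ ≤ ∫ y, ν' * g2 y ∂ν := step4
    _ = ν' * ∫ y, g2 y ∂ν := step5
    _ = ν' * ∫ ω, (∑ k, V k ω ^ 2) ^ 2 ∂P := by rw [step6]
    _ ≤ ν' * (ν' * (∑ k, c k) ^ 2) := mul_le_mul_of_nonneg_left hsumVV hν'0
    _ = ν' ^ 2 * (Matrix.trace (Sig ^ 2)) ^ 2 := by rw [htr]; ring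
end
end

section
/- Let A be an n×n real symmetric matrix and ρ ∈ ℝ be such that both I_n + ρA and I_n − 2ρA are positive definite. Then 2(I_n + ρA)^{−1} − I_n = I_n − 2ρA + 2ρ² A² (I_n + ρA)^{−1}, the matrix 2ρ² A² (I_n + ρA)^{−1} is positive semidefinite, and consequently det( 2(I_n + ρA)^{−1} − I_n ) ≥ det( I_n − 2ρA ). -/
open Matrix

lemma aux_one_le_det_one_add {m : ℕ} (C : Matrix (Fin m) (Fin m) ℝ)
    (hC : C.PosSemidef) : 1 ≤ (1 + C).det := by
  have hU := hC.1.spectral_theorem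
  set U : Matrix (Fin m) (Fin m) ℝ := (hC.1.eigenvectorUnitary : Matrix (Fin m) (Fin m) ℝ) with hUdef
  have h1 : U * (star U) = 1 := (Unitary.mem_iff.mp hC.1.eigenvectorUnitary.2).2
  have key : 1 + C = U * (1 + diagonal hC.1.eigenvalues) * star U := by
    rw [mul_add, add_mul, mul_one, h1]
    congr 1

  rw [key, det_mul, det_mul]
  have hdetU : U.det * (star U).det = 1 := by
    rw [← det_mul, h1, det_one]
  have hd : 1 ≤ (1 + diagonal hC.1.eigenvalues).det := by
    have h2 : (1 : Matrix (Fin m) (Fin m) ℝ) + diagonal hC.1.eigenvalues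
        = diagonal (fun i => 1 + hC.1.eigenvalues i) := by
      rw [← diagonal_one, diagonal_add]
    rw [h2, det_diagonal]
    calc (1:ℝ) = ∏ _i : Fin m, 1 := by simp
      _ ≤ ∏ i, (1 + hC.1.eigenvalues i) :=
        Finset.prod_le_prod (fun i _ => zero_le_one)
          (fun i _ => by linarith [hC.eigenvalues_nonneg i])
  -- det U * det (star U) = 1, so they're both nonzero and their product with hd
  nlinarith [sq_nonneg (U.det - (star U).det), sq_nonneg (U.det + (star U).det),
    hdetU, hd]

lemma aux_det_le_det_add {m : ℕ} (M S : Matrix (Fin m) (Fin m) ℝ)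
    (hM : M.PosDef) (hS : S.PosSemidef) : M.det ≤ (M + S).det := by
  set R := (open scoped MatrixOrder in CFC.sqrt M) with hRdef
  have hRps : R.PosSemidef := (open scoped MatrixOrder in (CFC.sqrt_nonneg M).posSemidef)
  have hRR : R * R = M :=
    (open scoped MatrixOrder in CFC.sqrt_mul_sqrt_self M hM.posSemidef.nonneg)
  have hdetM : 0 < M.det := hM.det_pos
  have hdetR : IsUnit R.det := by
    apply isUnit_iff_ne_zero.mpr
    intro h
    rw [← hRR, det_mul, h, mul_zero] at hdetM; exact lt_irrefl _ hdetM
  have hRinv : R * R⁻¹ = 1 := mul_nonsing_inv R hdetR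
  have hRinv' : R⁻¹ * R = 1 := nonsing_inv_mul R hdetR
  have hC : (R⁻¹ * S * R⁻¹).PosSemidef := by
    have h := hS.mul_mul_conjTranspose_same R⁻¹
    rwa [hRps.1.inv] at h
  have key : M + S = R * (1 + R⁻¹ * S * R⁻¹) * R := by
    rw [mul_add, add_mul, mul_one, hRR]
    congr 1
    calc S = 1 * S * 1 := by rw [one_mul, mul_one]
      _ = (R * R⁻¹) * S * (R⁻¹ * R) := by rw [hRinv, hRinv']
      _ = R * (R⁻¹ * S * R⁻¹) * R := by noncomm_ring
  rw [key, det_mul, det_mul, ← hRR, det_mul]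
  have h1 := aux_one_le_det_one_add _ hC
  have hRdet_pos : 0 < R.det * R.det := by rw [← det_mul, hRR]; exact hdetM
  nlinarith [h1, hRdet_pos]
open Matrix

/-- the matrix identity and determinant inequality used in the minimax
lower-bound argument.  If `A` is symmetric and both `I + ρA` and `I − 2ρA` are positive
definite, then `2(I + ρA)⁻¹ − I = I − 2ρA + 2ρ²A²(I + ρA)⁻¹`, the matrix
`2ρ²A²(I + ρA)⁻¹` is positive semidefinite, and
`det(2(I + ρA)⁻¹ − I) ≥ det(I − 2ρA)`. -/
theorem two_inv_sub_one_identity_and_det_bound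
    (n : ℕ) (A : Matrix (Fin n) (Fin n) ℝ) (hA : A.IsSymm) (ρ : ℝ)
    (h1 : (1 + ρ • A).PosDef) (h2 : (1 - (2 * ρ) • A).PosDef) :
    (2 : ℝ) • (1 + ρ • A)⁻¹ - 1
        = 1 - (2 * ρ) • A + (2 * ρ ^ 2) • (A ^ 2 * (1 + ρ • A)⁻¹) ∧
    ((2 * ρ ^ 2) • (A ^ 2 * (1 + ρ • A)⁻¹)).PosSemidef ∧
    (1 - (2 * ρ) • A).det ≤ ((2 : ℝ) • (1 + ρ • A)⁻¹ - 1).det := by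
  set B : Matrix (Fin n) (Fin n) ℝ := 1 + ρ • A with hB
  have hdetB : IsUnit B.det := isUnit_iff_ne_zero.mpr (ne_of_gt h1.det_pos)
  have hBi : B * B⁻¹ = 1 := mul_nonsing_inv B hdetB
  have hBi' : B⁻¹ * B = 1 := nonsing_inv_mul B hdetB
  have hcomm : A * B = B * A := by
    simp [hB, mul_add, add_mul, mul_smul_comm, smul_mul_assoc]
  have hAinv : A * B⁻¹ = B⁻¹ * A := by
    calc A * B⁻¹ = (B⁻¹ * B) * A * B⁻¹ := by rw [hBi', one_mul]
      _ = B⁻¹ * (A * B) * B⁻¹ := by rw [hcomm]; noncomm_ring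
      _ = B⁻¹ * A * (B * B⁻¹) := by noncomm_ring
      _ = B⁻¹ * A := by rw [hBi, mul_one]
  have hmul : ((2 : ℝ) • B⁻¹ - 1) * B
      = (1 - (2 * ρ) • A + (2 * ρ ^ 2) • (A ^ 2 * B⁻¹)) * B := by
    have lhs : ((2 : ℝ) • B⁻¹ - 1) * B = 1 - ρ • A := by
      rw [sub_mul, smul_mul_assoc, hBi', one_mul, hB]
      module
    have rhs : (1 - (2 * ρ) • A + (2 * ρ ^ 2) • (A ^ 2 * B⁻¹)) * B = 1 - ρ • A := by
      rw [add_mul, sub_mul, one_mul, smul_mul_assoc, smul_mul_assoc, mul_assoc,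
        hBi', mul_one, hB]
      simp only [mul_add, mul_one, mul_smul_comm, smul_smul, ← pow_two]
      module
    rw [lhs, rhs]
  have eq1 : (2 : ℝ) • B⁻¹ - 1 = 1 - (2 * ρ) • A + (2 * ρ ^ 2) • (A ^ 2 * B⁻¹) := by
    have h := congrArg (· * B⁻¹) hmul
    simpa [mul_assoc, hBi] using h
  have hpsd : ((2 * ρ ^ 2) • (A ^ 2 * B⁻¹)).PosSemidef := by
    have hb := (h1.posSemidef.inv).mul_mul_conjTranspose_same A
    have hAH : Aᴴ = A := hA
    rw [hAH] at hb
    have heq : A * B⁻¹ * A = A ^ 2 * B⁻¹ := by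
      rw [pow_two, mul_assoc, ← hAinv, ← mul_assoc]
    rw [heq] at hb
    have hherm : ((2 * ρ ^ 2) • (A ^ 2 * B⁻¹)).IsHermitian := by
      show _ᴴ = _
      rw [conjTranspose_smul, hb.1, star_trivial]
    refine .of_dotProduct_mulVec_nonneg hherm fun x => ?_
    rw [smul_mulVec, dotProduct_smul, smul_eq_mul]
    exact mul_nonneg (by positivity) (hb.dotProduct_mulVec_nonneg x)
  refine ⟨eq1, hpsd, ?_⟩
  rw [eq1]
  exact aux_det_le_det_add _ _ h2 hpsd
end
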